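/- arXiv:2210.13155 — 3 statements merged into one kernel-verified Lean document; each statement's English description precedes it below -/
import Mathlib

section
/- Let K be a field and let e be a nilpotent endomorphism of a finite-dimensional K-vector space V with Jordan block sizes λ_1 ≥ λ_2 ≥ ... ≥ λ_r. Then the centralizer of e in End(V), i.e. {x ∈ End(V) : x∘e = e∘x}, has dimension Σ_{i=1}^r Σ_{j=1}^r min(λ_i, λ_j). -/
set_option synthInstance.maxHeartbeats 1000000
set_option maxHeartbeats 1000000

/-- A subtype of a sigma type cut out by an arbitrary predicate is equivalent to the
sigma type of the fiberwise subtypes. -/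
def sigmaSubtypeEquiv' {ι : Type*} {β : ι → Type*} (P : (Σ i, β i) → Prop) :
    {p : Σ i, β i // P p} ≃ Σ i, {k : β i // P ⟨i, k⟩} where
  toFun x := ⟨x.1.1, x.1.2, x.2⟩
  invFun y := ⟨⟨y.1, y.2.1⟩, y.2.2⟩
  left_inv _ := rfl
  right_inv _ := rfl

lemma card_aux (m n : ℕ) : Fintype.card {k : Fin m // m ≤ (k : ℕ) + n} = min m n := by
  rcases Nat.eq_zero_or_pos m with rfl | hm
  · simp
  rcases Nat.eq_zero_or_pos n with rfl | hn
  · rw [Nat.min_zero, Fintype.card_eq_zero_iff]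
    refine ⟨fun k => ?_⟩
    have := k.1.isLt
    omega
  rw [Fintype.card_subtype]
  have h1 : (Finset.univ.filter fun k : Fin m => m ≤ (k : ℕ) + n)
      = Finset.Ici (⟨m - min m n, by omega⟩ : Fin m) := by
    ext k
    have := k.isLt
    simp only [Finset.mem_filter, Finset.mem_univ, true_and, Finset.mem_Ici, Fin.le_def]
    omega
  rw [h1, Fin.card_Ici, Fin.val_mk]
  omega

section aux
variable {K : Type*} [Field K] {V : Type*} [AddCommGroup V] [Module K V]
  {e : Module.End K V} {r : ℕ} {lam : Fin r → ℕ} {v : Fin r → V}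
  (b : Module.Basis (Σ i : Fin r, Fin (lam i)) K V)
  (hb : ∀ (i : Fin r) (k : Fin (lam i)), b ⟨i, k⟩ = (e ^ (k : ℕ)) (v i))
  (hzero : ∀ i : Fin r, (e ^ lam i) (v i) = 0)

include hb hzero in
lemma aux_pow_basis (n : ℕ) (i : Fin r) (k : Fin (lam i)) :
    (e ^ n) (b ⟨i, k⟩) = if h : (k : ℕ) + n < lam i then b ⟨i, ⟨(k : ℕ) + n, h⟩⟩ else 0 := by
  have h1 : (e ^ n) (b ⟨i, k⟩) = (e ^ ((k : ℕ) + n)) (v i) := by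
    rw [hb, ← Module.End.mul_apply, ← pow_add, add_comm]
  rw [h1]
  split_ifs with h
  · rw [hb i ⟨(k : ℕ) + n, h⟩]
  · have h2 : (k : ℕ) + n = ((k : ℕ) + n - lam i) + lam i := by omega
    rw [h2, pow_add, Module.End.mul_apply, hzero, map_zero]

include hb hzero in
lemma aux_ker (n : ℕ) :
    LinearMap.ker (e ^ n) = Submodule.span K (b '' {p | lam p.1 ≤ (p.2 : ℕ) + n}) := by
  apply le_antisymm
  · intro x hx
    rw [Module.Basis.mem_span_image]
    intro p hp
    rcases p with ⟨i, k⟩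
    simp only [Set.mem_setOf_eq]
    by_contra hcon
    push_neg at hcon
    have hp' : b.repr x ⟨i, k⟩ ≠ 0 := Finsupp.mem_support_iff.mp hp
    apply hp'
    have hx0 : (e ^ n) x = 0 := hx
    have hsum : (e ^ n) x = ∑ p : Σ i : Fin r, Fin (lam i), b.repr x p • (e ^ n) (b p) := by
      conv_lhs => rw [← b.sum_repr x]
      rw [map_sum]
      simp only [map_smul]
    have heval : b.repr ((e ^ n) x) ⟨i, ⟨(k : ℕ) + n, hcon⟩⟩ = b.repr x ⟨i, k⟩ := by
      rw [hsum, map_sum, Finsupp.finset_sum_apply]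
      rw [Finset.sum_eq_single (⟨i, k⟩ : Σ i : Fin r, Fin (lam i))]
      · rw [map_smul, aux_pow_basis b hb hzero, dif_pos hcon, Module.Basis.repr_self,
          Finsupp.smul_apply, Finsupp.single_eq_same, smul_eq_mul, mul_one]
      · rintro ⟨j, m⟩ - hne
        rw [map_smul, aux_pow_basis b hb hzero]
        split_ifs with hm
        · rw [Module.Basis.repr_self, Finsupp.smul_apply, Finsupp.single_apply]
          rw [if_neg, smul_zero]
          intro hEq
          apply hne
          rcases Sigma.mk.inj_iff.mp hEq with ⟨rfl, hheq⟩
          have h3 : ((m : ℕ) + n : ℕ) = (k : ℕ) + n := congrArg Fin.val (eq_of_heq hheq)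
          have h4 : (m : ℕ) = (k : ℕ) := by omega
          exact congrArg _ (Fin.ext h4)
        · rw [map_zero, smul_zero, Finsupp.coe_zero, Pi.zero_apply]
      · intro h
        exact absurd (Finset.mem_univ _) h
    rw [← heval, hx0, map_zero, Finsupp.coe_zero, Pi.zero_apply]
  · rw [Submodule.span_le]
    rintro - ⟨⟨i, k⟩, hp, rfl⟩
    simp only [Set.mem_setOf_eq] at hp
    simp only [SetLike.mem_coe, LinearMap.mem_ker]
    rw [aux_pow_basis b hb hzero, dif_neg (by omega)]

include hb hzero in
lemma aux_finrank_ker (n : ℕ) :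
    Module.finrank K (LinearMap.ker (e ^ n)) = ∑ j : Fin r, min (lam j) n := by
  rw [aux_ker b hb hzero n]
  set S : Set (Σ i : Fin r, Fin (lam i)) := {p | lam p.1 ≤ (p.2 : ℕ) + n} with hS
  have hli : LinearIndependent K (fun p : S => b p.1) :=
    b.linearIndependent.comp _ Subtype.val_injective
  have himg : b '' S = Set.range (fun p : S => b p.1) := Set.image_eq_range _ _
  rw [himg, finrank_span_eq_card hli]
  rw [Fintype.card_congr (sigmaSubtypeEquiv' (fun p : Σ i : Fin r, Fin (lam i) => p ∈ S))]
  rw [Fintype.card_sigma]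
  refine Finset.sum_congr rfl fun j _ => ?_
  rw [Fintype.card_congr (Equiv.subtypeEquivRight (fun k : Fin (lam j) =>
    show (⟨j, k⟩ : Σ i : Fin r, Fin (lam i)) ∈ S ↔ lam j ≤ (k : ℕ) + n from Iff.rfl))]
  exact card_aux (lam j) n

end aux

/-- The centralizer of a nilpotent endomorphism with Jordan block sizes
`λ_1 ≥ ... ≥ λ_r` has dimension `Σ_i Σ_j min (λ_i) (λ_j)`. -/
theorem stmt_0 (K : Type*) [Field K] (V : Type*) [AddCommGroup V] [Module K V]
    [FiniteDimensional K V] (e : Module.End K V) (r : ℕ) (lam : Fin r → ℕ)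
    (hanti : Antitone lam) (v : Fin r → V)
    (b : Module.Basis (Σ i : Fin r, Fin (lam i)) K V)
    (hb : ∀ (i : Fin r) (k : Fin (lam i)), b ⟨i, k⟩ = (e ^ (k : ℕ)) (v i))
    (hzero : ∀ i : Fin r, (e ^ lam i) (v i) = 0) :
    Module.finrank K (Subalgebra.centralizer K {e} : Subalgebra K (Module.End K V)) =
      ∑ i : Fin r, ∑ j : Fin r, min (lam i) (lam j) := by
  classical
  set C := Subalgebra.centralizer K {e} with hC
  -- commuting elements commute with powers
  have hcp : ∀ x : Module.End K V, x ∈ C → ∀ (n : ℕ) (w : V),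
      x ((e ^ n) w) = (e ^ n) (x w) := by
    intro x hx n w
    have h1 : e * x = x * e := (Subalgebra.mem_centralizer_iff K).mp hx e rfl
    have h2 : e ^ n * x = x * e ^ n := Commute.pow_left h1 n
    have := DFunLike.congr_fun h2 w
    simpa only [Module.End.mul_apply] using this.symm
  -- the linear map to the product of kernels
  let P : Fin r → Submodule K V := fun i => LinearMap.ker (e ^ lam i)
  let Φ : C →ₗ[K] (Π i, P i) :=
    { toFun := fun x => fun i => ⟨(x : Module.End K V) (v i), by
        simp only [P, LinearMap.mem_ker]
        rw [← hcp x x.2, hzero, map_zero]⟩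
      map_add' := by
        intro x y
        funext i
        apply Subtype.ext
        simp
      map_smul' := by
        intro c x
        funext i
        apply Subtype.ext
        simp }
  have hinj : Function.Injective Φ := by
    intro x y hxy
    apply Subtype.ext
    apply b.ext
    rintro ⟨i, k⟩
    rw [hb, hcp x x.2, hcp y y.2]
    have := congrFun hxy i
    have hval : (x : Module.End K V) (v i) = (y : Module.End K V) (v i) :=
      congrArg Subtype.val this
    rw [hval]
  have hsurj : Function.Surjective Φ := by
    intro w
    let f : Module.End K V := b.constr (M' := V) K fun p => (e ^ (p.2 : ℕ)) ((w p.1 : V))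
    have hf : ∀ (i : Fin r) (k : Fin (lam i)), f (b ⟨i, k⟩) = (e ^ (k : ℕ)) ((w i : V)) :=
      fun i k => b.constr_basis K _ ⟨i, k⟩
    have hwker : ∀ i : Fin r, (e ^ lam i) ((w i : V)) = 0 := fun i => (w i).2
    have hfC : f ∈ C := by
      rw [hC, Subalgebra.mem_centralizer_iff]
      intro g hg
      rw [Set.mem_singleton_iff] at hg
      rw [hg]
      apply b.ext
      rintro ⟨i, k⟩
      rw [Module.End.mul_apply, Module.End.mul_apply, hf]
      have he1 : e (b ⟨i, k⟩) = if h : (k : ℕ) + 1 < lam i then b ⟨i, ⟨(k : ℕ) + 1, h⟩⟩ else 0 := by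
        have := aux_pow_basis b hb hzero 1 i k
        rwa [pow_one] at this
      rw [he1]
      split_ifs with h
      · rw [hf i ⟨(k : ℕ) + 1, h⟩]
        rw [← Module.End.mul_apply, ← pow_succ']
      · rw [map_zero, ← Module.End.mul_apply, ← pow_succ']
        have hk : (k : ℕ) + 1 = lam i := by have := k.isLt; omega
        rw [hk, hwker]
    refine ⟨⟨f, hfC⟩, ?_⟩
    funext i
    apply Subtype.ext
    show f (v i) = (w i : V)
    by_cases h : 0 < lam i
    · have h0 : b ⟨i, ⟨0, h⟩⟩ = v i := by rw [hb]; simp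
      have := hf i ⟨0, h⟩
      rw [h0] at this
      simpa using this
    · have hl : lam i = 0 := by omega
      have hv0 : v i = 0 := by
        have := hzero i
        rwa [hl, pow_zero, Module.End.one_apply] at this
      have hw0 : (w i : V) = 0 := by
        have := hwker i
        rwa [hl, pow_zero, Module.End.one_apply] at this
      rw [hv0, map_zero, hw0]
  have hequiv : Module.finrank K C = Module.finrank K (Π i, P i) :=
    (LinearEquiv.ofBijective Φ ⟨hinj, hsurj⟩).finrank_eq
  rw [hequiv, Module.finrank_pi_fintype]
  refine Finset.sum_congr rfl fun i _ => ?_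
  rw [aux_finrank_ker b hb hzero (lam i)]
  exact Finset.sum_congr rfl fun j _ => min_comm _ _
end

section
/- Let K be an algebraically closed field and e a nilpotent N×N matrix over K whose largest Jordan block has size λ_1. Then the centre of the centralizer of e in gl_N(K), namely {x : [x,y] = 0 for all y with [e,y] = 0}, equals the linear span of I, e, e^2, ..., e^{λ_1 − 1}, and in particular has dimension λ_1. -/
open Polynomial Matrix

namespace Stmt2Aux

variable {K : Type*} [Field K] {N n : ℕ}

/-- The linear map `p ↦ p(e) *ᵥ w`. -/
noncomputable def avec (e : Matrix (Fin N) (Fin N) K) (w : Fin N → K) :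
    K[X] →ₗ[K] (Fin N → K) where
  toFun p := (aeval e p) *ᵥ w
  map_add' p q := by simp only [_root_.map_add, Matrix.add_mulVec]
  map_smul' c p := by
    simp only [_root_.map_smul, Matrix.smul_mulVec, RingHom.id_apply]

lemma avec_apply (e : Matrix (Fin N) (Fin N) K) (w : Fin N → K) (p : K[X]) :
    avec e w p = (aeval e p) *ᵥ w := rfl

lemma e_mulVec_avec (e : Matrix (Fin N) (Fin N) K) (w : Fin N → K) (p : K[X]) :
    e *ᵥ avec e w p = avec e w (X * p) := by
  rw [avec_apply, avec_apply, Matrix.mulVec_mulVec, _root_.map_mul, aeval_X]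

lemma pow_eq_zero_of_le {e : Matrix (Fin N) (Fin N) K} (he : e ^ n = 0)
    {m : ℕ} (hm : n ≤ m) : e ^ m = 0 := by
  obtain ⟨d, rfl⟩ := Nat.exists_eq_add_of_le hm
  rw [pow_add, he, zero_mul]

/-- The crucial independence lemma: if `p(e)v` is "orthogonal" to the functional
`u ↦ (e^m u) i0` for all `m < n`, where `(e^(n-1) v) i0 ≠ 0`, then `p = 0`. -/
lemma poly_eq_zero {e : Matrix (Fin N) (Fin N) K} (he : e ^ n = 0)
    {v : Fin N → K} {i0 : Fin N} (hv : ((e ^ (n - 1)) *ᵥ v) i0 ≠ 0)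
    {p : K[X]} (hp : p ∈ degreeLT K n)
    (hz : ∀ m, m < n → ((e ^ m) *ᵥ ((aeval e p) *ᵥ v)) i0 = 0) : p = 0 := by
  have hn : 0 < n := by
    by_contra h
    have h0 : n = 0 := by omega
    apply hv
    rw [h0] at he
    simp only [pow_zero] at he
    rw [h0]
    simp [he]
  by_cases hp0 : p = 0
  · exact hp0
  have hnd : p.natDegree < n := (natDegree_lt_iff_degree_lt hp0).mpr (mem_degreeLT.mp hp)
  have hc : ∀ k, k < n → p.coeff k = 0 := by
    intro k
    induction k using Nat.strong_induction_on with
    | _ k IH =>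
      intro hk
      have hm := hz (n - 1 - k) (by omega)
      have hsum : ((e ^ (n - 1 - k)) *ᵥ ((aeval e p) *ᵥ v)) i0
          = ∑ j ∈ Finset.range n, p.coeff j * (((e ^ (n - 1 - k + j)) *ᵥ v) i0) := by
        have hpe : (X : K[X]) ^ (n - 1 - k) * p
            = ∑ j ∈ Finset.range n, p.coeff j • (X : K[X]) ^ (n - 1 - k + j) := by
          conv_lhs => rw [p.as_sum_range' n hnd]
          rw [Finset.mul_sum]
          refine Finset.sum_congr rfl fun j _ => ?_
          rw [X_pow_eq_monomial, monomial_mul_monomial, one_mul, smul_X_eq_monomial]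
        calc ((e ^ (n - 1 - k)) *ᵥ ((aeval e p) *ᵥ v)) i0
            = (avec e v ((X : K[X]) ^ (n - 1 - k) * p)) i0 := by
              rw [avec_apply, _root_.map_mul, _root_.map_pow, aeval_X, Matrix.mulVec_mulVec]
          _ = ∑ j ∈ Finset.range n, p.coeff j * (((e ^ (n - 1 - k + j)) *ᵥ v) i0) := by
              rw [hpe, _root_.map_sum, Finset.sum_apply]
              refine Finset.sum_congr rfl fun j _ => ?_
              rw [_root_.map_smul, Pi.smul_apply, smul_eq_mul, avec_apply, _root_.map_pow, aeval_X]
      rw [hsum] at hm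
      rw [Finset.sum_eq_single k] at hm
      · have hexp : n - 1 - k + k = n - 1 := by omega
        rw [hexp] at hm
        rcases mul_eq_zero.mp hm with h | h
        · exact h
        · exact absurd h hv
      · intro j hj hjk
        rcases lt_or_gt_of_ne hjk with h | h
        · rw [IH j h (lt_trans h hk), zero_mul]
        · have : e ^ (n - 1 - k + j) = 0 := pow_eq_zero_of_le he (by omega)
          rw [this, Matrix.zero_mulVec]
          simp
      · intro h
        exact absurd (Finset.mem_range.mpr hk) h
  refine Polynomial.ext fun m => ?_
  by_cases hmn : m < n
  · simp [hc m hmn]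
  · exact Polynomial.coeff_eq_zero_of_natDegree_lt (lt_of_lt_of_le hnd (by omega : n ≤ m))

/-- Reduction of `X * p` modulo `X ^ n` stays in `degreeLT` and has the same
evaluation at the nilpotent `e`. -/
lemma shift_reduce {e : Matrix (Fin N) (Fin N) K} (he : e ^ n = 0) (hn : 0 < n)
    {p : K[X]} (hp : p ∈ degreeLT K n) :
    ∃ q ∈ degreeLT K n, aeval e q = e * aeval e p := by
  refine ⟨X * p - C (p.coeff (n - 1)) * X ^ n, ?_, ?_⟩
  · rw [mem_degreeLT, Polynomial.degree_lt_iff_coeff_zero]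
    intro m hm
    have hm' : (n : ℕ) ≤ m := by exact_mod_cast hm
    obtain ⟨m, rfl⟩ : ∃ m', m = m' + 1 := ⟨m - 1, by omega⟩
    rw [coeff_sub, coeff_C_mul, coeff_X_pow, coeff_X_mul]
    by_cases hmn : m + 1 = n
    · have : m = n - 1 := by omega
      rw [this, if_pos (by omega : n - 1 + 1 = n), mul_one, sub_self]
    · have h1 : p.coeff m = 0 := by
        apply Polynomial.coeff_eq_zero_of_degree_lt
        calc p.degree < (n : WithBot ℕ) := mem_degreeLT.mp hp
          _ ≤ (m : WithBot ℕ) := by exact_mod_cast (by omega : n ≤ m)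
      rw [h1, if_neg hmn, mul_zero, sub_self]
  · rw [_root_.map_sub, _root_.map_mul, _root_.map_mul, aeval_X, aeval_C, _root_.map_pow, aeval_X, he,
      mul_zero, sub_zero]

lemma natDegree_lt_of_mem_degreeLT (hn : 0 < n) {p : K[X]} (hp : p ∈ degreeLT K n) :
    p.natDegree < n := by
  rcases eq_or_ne p 0 with rfl | h
  · simpa using hn
  · exact (natDegree_lt_iff_degree_lt h).mpr (mem_degreeLT.mp hp)

end Stmt2Aux

open Stmt2Aux

/-- The centre of the centralizer of a nilpotent matrix `e` with largest Jordan
block of size `λ₁` (equivalently, nilpotency index `λ₁`) is the span of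
`I, e, ..., e^(λ₁-1)`, of dimension `λ₁`. -/
theorem stmt_2 (K : Type*) [Field K] [IsAlgClosed K] (N lam1 : ℕ)
    (e : Matrix (Fin N) (Fin N) K)
    (h1 : e ^ lam1 = 0) (h2 : e ^ (lam1 - 1) ≠ 0) :
    Set.centralizer (Set.centralizer {e}) =
      ↑(Submodule.span K (Set.range fun k : Fin lam1 => e ^ (k : ℕ))) ∧
    Module.finrank K
      (Submodule.span K (Set.range fun k : Fin lam1 => e ^ (k : ℕ))) = lam1 := by
  classical
  set n := lam1 with hn_def
  have hn : 0 < n := by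
    by_contra h
    have h0 : n = 0 := by omega
    rw [h0, pow_zero] at h1
    apply h2
    rw [h0]
    simpa using h1
  -- choose a cyclic vector and a coordinate functional
  obtain ⟨v, hv0⟩ : ∃ v : Fin N → K, (e ^ (n - 1)) *ᵥ v ≠ 0 := by
    by_contra h
    push_neg at h
    apply h2
    ext i j
    have := congrFun (h (Pi.single j 1)) i
    simpa using this
  obtain ⟨i0, hv⟩ : ∃ i0, ((e ^ (n - 1)) *ᵥ v) i0 ≠ 0 := by
    by_contra h
    push_neg at h
    exact hv0 (funext h)
  -- the complement `W` of the cyclic subspace, cut out by functionals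
  set Φ : (Fin N → K) →ₗ[K] (Fin n → K) :=
    LinearMap.pi (fun m : Fin n => (LinearMap.proj i0).comp (e ^ (m : ℕ)).mulVecLin)
    with hΦ_def
  set W := LinearMap.ker Φ with hW_def
  have hmemW : ∀ w, w ∈ W ↔ ∀ m : Fin n, ((e ^ (m : ℕ)) *ᵥ w) i0 = 0 := by
    intro w
    rw [hW_def, LinearMap.mem_ker, hΦ_def, funext_iff]
    simp [LinearMap.pi_apply]
  -- the cyclic subspace `U`, as the range of evaluation on `degreeLT`
  set B : degreeLT K n →ₗ[K] (Fin N → K) := (avec e v).comp (degreeLT K n).subtype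
    with hB_def
  have hB_apply : ∀ q : degreeLT K n, B q = (aeval e (q : K[X])) *ᵥ v := fun q => rfl
  have hBinj : Function.Injective B := by
    rw [← LinearMap.ker_eq_bot, Submodule.eq_bot_iff]
    rintro ⟨p, hp⟩ hker
    have hz : (aeval e p) *ᵥ v = 0 := hker
    refine Subtype.ext (poly_eq_zero h1 hv hp fun m hm => ?_)
    rw [hz, Matrix.mulVec_zero]
    rfl
  set U := LinearMap.range B with hU_def
  have hvU : v ∈ U := by
    refine ⟨⟨1, mem_degreeLT.mpr ?_⟩, ?_⟩
    · rw [Polynomial.degree_one]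
      exact_mod_cast hn
    · rw [hB_apply]
      show (aeval e (1 : K[X])) *ᵥ v = v
      rw [_root_.map_one, Matrix.one_mulVec]
  have hUe : ∀ u ∈ U, e *ᵥ u ∈ U := by
    rintro _ ⟨⟨p, hp⟩, rfl⟩
    obtain ⟨q, hq, hq2⟩ := shift_reduce h1 hn hp
    refine ⟨⟨q, hq⟩, ?_⟩
    rw [hB_apply, hB_apply, hq2, ← Matrix.mulVec_mulVec]
  have hWe : ∀ w ∈ W, e *ᵥ w ∈ W := by
    intro w hw
    rw [hmemW] at hw ⊢
    intro m
    rw [Matrix.mulVec_mulVec, ← pow_succ]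
    by_cases h : (m : ℕ) + 1 < n
    · exact hw ⟨(m : ℕ) + 1, h⟩
    · rw [Stmt2Aux.pow_eq_zero_of_le h1 (by omega), Matrix.zero_mulVec]
      rfl
  -- finite dimension bookkeeping
  haveI : FiniteDimensional K (degreeLT K n) :=
    Module.Finite.equiv (Polynomial.degreeLTEquiv K n).symm
  have hrank1 : Module.finrank K (LinearMap.range Φ) + Module.finrank K W
      = Module.finrank K (Fin N → K) := by
    rw [hW_def]
    exact LinearMap.finrank_range_add_finrank_ker Φ
  have hrank2 : Module.finrank K (LinearMap.range Φ) ≤ n := by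
    calc Module.finrank K (LinearMap.range Φ) ≤ Module.finrank K (Fin n → K) :=
          Submodule.finrank_le _
      _ = n := by simp
  have hrankU : Module.finrank K U = n := by
    rw [hU_def, LinearMap.finrank_range_of_inj hBinj,
      (Polynomial.degreeLTEquiv K n).finrank_eq]
    simp
  have hdisj : Disjoint U W := by
    rw [Submodule.disjoint_def]
    rintro _ ⟨⟨p, hp⟩, rfl⟩ hxW
    have hp0 : p = 0 := by
      refine poly_eq_zero h1 hv hp fun m hm => ?_
      have := (hmemW _).mp hxW ⟨m, hm⟩
      rw [hB_apply] at this
      exact this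
    rw [hB_apply]
    simp [hp0]
  have hVrank : Module.finrank K (Fin N → K) = N := by simp
  have hsup : U ⊔ W = ⊤ := by
    apply Submodule.eq_top_of_finrank_eq
    have h3 := Submodule.finrank_sup_add_finrank_inf_eq U W
    rw [hdisj.eq_bot, finrank_bot, add_zero, hrankU] at h3
    have h5 := Submodule.finrank_le (U ⊔ W)
    rw [hVrank] at h5 hrank1 ⊢
    omega
  have hcompl : IsCompl U W := ⟨hdisj, codisjoint_iff.mpr hsup⟩
  set π := U.linearProjOfIsCompl W hcompl with hπ_def
  have hsubW : ∀ z, z - (π z : Fin N → K) ∈ W := by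
    intro z
    have hz : z ∈ U ⊔ W := by rw [hsup]; trivial
    obtain ⟨u, hu, w, hw, rfl⟩ := Submodule.mem_sup.mp hz
    have e1 : π u = ⟨u, hu⟩ := Submodule.linearProjOfIsCompl_apply_left hcompl ⟨u, hu⟩
    have e2 : π w = 0 := Submodule.linearProjOfIsCompl_apply_right' hcompl hw
    rw [map_add, e1, e2, add_zero]
    simpa using hw
  have hπe : ∀ z, (π (e *ᵥ z) : Fin N → K) = e *ᵥ (π z : Fin N → K) := by
    intro z
    have hz : e *ᵥ z = e *ᵥ (π z : Fin N → K) + e *ᵥ (z - (π z : Fin N → K)) := by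
      rw [← Matrix.mulVec_add, add_sub_cancel]
    rw [hz, map_add]
    have e1 : π (e *ᵥ (π z : Fin N → K)) = ⟨e *ᵥ (π z : Fin N → K), hUe _ (π z).2⟩ :=
      Submodule.linearProjOfIsCompl_apply_left hcompl ⟨_, hUe _ (π z).2⟩
    have e2 : π (e *ᵥ (z - (π z : Fin N → K))) = 0 :=
      Submodule.linearProjOfIsCompl_apply_right' hcompl (hWe _ (hsubW z))
    rw [e1, e2, add_zero]
  -- the "coordinates" map
  set Beq := LinearEquiv.ofInjective B hBinj with hBeq_def
  set ρ : (Fin N → K) →ₗ[K] degreeLT K n :=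
    (Beq.symm : U ≃ₗ[K] degreeLT K n).toLinearMap.comp π with hρ_def
  have hρB : ∀ z, B (ρ z) = (π z : Fin N → K) := by
    intro z
    have h6 : Beq (Beq.symm (π z)) = π z := Beq.apply_symm_apply (π z)
    have h7 : (Beq (Beq.symm (π z)) : Fin N → K) = B (Beq.symm (π z)) :=
      LinearEquiv.ofInjective_apply B (h := hBinj) _
    show B (Beq.symm (π z)) = _
    rw [← h7, h6]
  -- the centralizer elements `y_w : p(e)v ↦ p(e)w`
  set yw : (Fin N → K) → ((Fin N → K) →ₗ[K] (Fin N → K)) := fun w =>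
    ((avec e w).comp (degreeLT K n).subtype).comp ρ with hyw_def
  have hyw_apply : ∀ w z, yw w z = (aeval e ((ρ z : K[X]))) *ᵥ w := fun w z => rfl
  have hyw_e : ∀ w z, yw w (e *ᵥ z) = e *ᵥ yw w z := by
    intro w z
    obtain ⟨q, hq, hq2⟩ := shift_reduce h1 hn (ρ z).2
    have hρe : ρ (e *ᵥ z) = ⟨q, hq⟩ := by
      apply hBinj
      rw [hρB (e *ᵥ z), hπe z, hB_apply, hq2, ← Matrix.mulVec_mulVec, ← hρB z]
      rfl
    rw [hyw_apply, hyw_apply, hρe]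
    show (aeval e q) *ᵥ w = _
    rw [hq2, ← Matrix.mulVec_mulVec]
  have hyw_v : ∀ w, yw w v = w := by
    intro w
    have h1mem : (1 : K[X]) ∈ degreeLT K n := by
      rw [mem_degreeLT, Polynomial.degree_one]
      exact_mod_cast hn
    have hρv : ρ v = ⟨1, h1mem⟩ := by
      apply hBinj
      rw [hρB v]
      have hπv : π v = ⟨v, hvU⟩ := Submodule.linearProjOfIsCompl_apply_left hcompl ⟨v, hvU⟩
      rw [hπv, hB_apply]
      show v = (aeval e (1 : K[X])) *ᵥ v
      rw [_root_.map_one, Matrix.one_mulVec]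
    rw [hyw_apply, hρv]
    show (aeval e (1 : K[X])) *ᵥ w = w
    rw [_root_.map_one, Matrix.one_mulVec]
  -- the matrices of the `y_w` lie in the centralizer of `e`
  have hY : ∀ w, (LinearMap.toMatrixAlgEquiv' (yw w)) ∈ Set.centralizer {e} := by
    intro w
    rw [Set.mem_centralizer_iff]
    intro m hm
    rw [Set.mem_singleton_iff] at hm
    subst hm
    apply Matrix.toLinAlgEquiv'.injective
    rw [_root_.map_mul, _root_.map_mul, Matrix.toLinAlgEquiv'_toMatrixAlgEquiv']
    refine LinearMap.ext fun z => ?_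
    rw [Module.End.mul_apply, Module.End.mul_apply, Matrix.toLinAlgEquiv'_apply,
      Matrix.toLinAlgEquiv'_apply]
    exact (hyw_e w z).symm
  constructor
  · ext x
    rw [SetLike.mem_coe]
    constructor
    · intro hx
      rw [Set.mem_centralizer_iff] at hx
      have hxw : ∀ w, x *ᵥ w = (aeval e ((ρ (x *ᵥ v) : K[X]))) *ᵥ w := by
        intro w
        have hcomm := hx _ (hY w)
        have h4 : Matrix.toLinAlgEquiv' (LinearMap.toMatrixAlgEquiv' (yw w) * x)
            = Matrix.toLinAlgEquiv' (x * LinearMap.toMatrixAlgEquiv' (yw w)) := by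
          rw [hcomm]
        rw [_root_.map_mul, _root_.map_mul, Matrix.toLinAlgEquiv'_toMatrixAlgEquiv'] at h4
        have h5 := LinearMap.congr_fun h4 v
        rw [Module.End.mul_apply, Module.End.mul_apply, Matrix.toLinAlgEquiv'_apply,
          Matrix.toLinAlgEquiv'_apply, hyw_v w] at h5
        rw [← h5, hyw_apply]
      have hxp : x = aeval e ((ρ (x *ᵥ v) : K[X])) := by
        apply Matrix.toLinAlgEquiv'.injective
        refine LinearMap.ext fun w => ?_
        rw [Matrix.toLinAlgEquiv'_apply, Matrix.toLinAlgEquiv'_apply]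
        exact hxw w
      rw [hxp, aeval_eq_sum_range' (natDegree_lt_of_mem_degreeLT hn (ρ (x *ᵥ v)).2)]
      refine Submodule.sum_mem _ fun i hi => Submodule.smul_mem _ _ ?_
      exact Submodule.subset_span ⟨⟨i, Finset.mem_range.mp hi⟩, rfl⟩
    · intro hx
      rw [Set.mem_centralizer_iff]
      intro y hy
      rw [Set.mem_centralizer_iff] at hy
      have hey : Commute e y := hy e rfl
      induction hx using Submodule.span_induction with
      | mem z hz =>
        obtain ⟨k, rfl⟩ := hz
        exact ((hey.pow_left (k : ℕ)).symm).eq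
      | zero => simp
      | add a b _ _ ha hb => rw [mul_add, add_mul, ha, hb]
      | smul c a _ ha => rw [mul_smul_comm, smul_mul_assoc, ha]
  · have hspan : Submodule.span K (Set.range fun k : Fin n => e ^ (k : ℕ))
        = LinearMap.range ((Polynomial.aeval e).toLinearMap.comp (degreeLT K n).subtype) := by
      apply le_antisymm
      · rw [Submodule.span_le]
        rintro _ ⟨k, rfl⟩
        refine ⟨⟨X ^ (k : ℕ), mem_degreeLT.mpr ?_⟩, by simp⟩
        rw [Polynomial.degree_X_pow]
        exact_mod_cast k.2
      · rintro _ ⟨⟨p, hp⟩, rfl⟩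
        show (aeval e) p ∈ _
        rw [aeval_eq_sum_range' (natDegree_lt_of_mem_degreeLT hn hp)]
        refine Submodule.sum_mem _ fun i hi => Submodule.smul_mem _ _ ?_
        exact Submodule.subset_span ⟨⟨i, Finset.mem_range.mp hi⟩, rfl⟩
    rw [hspan, LinearMap.finrank_range_of_inj, (Polynomial.degreeLTEquiv K n).finrank_eq]
    · simp
    · rw [← LinearMap.ker_eq_bot, Submodule.eq_bot_iff]
      rintro ⟨p, hp⟩ hker
      have hz : aeval e p = 0 := hker
      refine Subtype.ext (poly_eq_zero h1 hv hp fun m hm => ?_)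
      rw [hz, Matrix.zero_mulVec, Matrix.mulVec_zero]
      rfl
end

section
/- Let K be an algebraically closed field of characteristic p with p ∤ n, let φ : sl(n|n) → psl(n|n) = sl(n|n)/K·I be the quotient map, and let e ∈ sl(n|n)_0̄ be nilpotent. If x ∈ sl(n|n) satisfies [e, x] ∈ K·I_{2n}, then [e, x] = 0. Consequently φ restricts to a surjection sl(n|n)^e → psl(n|n)^{φ(e)} with kernel K·I, so dim psl(n|n)^{φ(e)} = dim sl(n|n)^e − 1. -/
open Matrix

/-- `gl(n|n)` as matrices indexed by `Fin n ⊕ Fin n`. -/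
abbrev glnn (K : Type*) [Field K] (n : ℕ) :=
  Matrix (Fin n ⊕ Fin n) (Fin n ⊕ Fin n) K

/-- The supertrace on `gl(n|n)` as a linear map: `str x = tr (J x)` where
`J = diag(I, -I)`. -/
noncomputable def strL (K : Type*) [Field K] (n : ℕ) : glnn K n →ₗ[K] K :=
  (Matrix.traceLinearMap (Fin n ⊕ Fin n) K K).comp
    (LinearMap.mulLeft K
      (Matrix.fromBlocks (1 : Matrix (Fin n) (Fin n) K) 0 0
        (-1 : Matrix (Fin n) (Fin n) K)))

/-- `ad e = [e, ·]` as a linear map (the super bracket with the even element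
`e` is the ordinary commutator). -/
noncomputable def adL {K : Type*} [Field K] {n : ℕ} (e : glnn K n) :
    glnn K n →ₗ[K] glnn K n :=
  LinearMap.mulLeft K e - LinearMap.mulRight K e

lemma part1_aux (K : Type*) [Field K] (n : ℕ)
    (hp : ¬ (ringChar K ∣ n))
    (e : glnn K n)
    (heven : e.toBlocks₁₂ = 0 ∧ e.toBlocks₂₁ = 0) :
    (∀ x : glnn K n,
      adL e x ∈ Submodule.span K {(1 : glnn K n)} → adL e x = 0) := by
  intro x hmem
  obtain ⟨c, hc⟩ := Submodule.mem_span_singleton.mp hmem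
  have key : e * x - x * e = c • 1 := by
    rw [hc]; simp [adL]
  have hb : (e * x - x * e).toBlocks₁₁ = (c • (1:glnn K n)).toBlocks₁₁ := by rw [key]
  have he : e = Matrix.fromBlocks e.toBlocks₁₁ 0 0 e.toBlocks₂₂ := by
    conv_lhs => rw [← Matrix.fromBlocks_toBlocks e]
    rw [heven.1, heven.2]
  have hx : x = Matrix.fromBlocks x.toBlocks₁₁ x.toBlocks₁₂ x.toBlocks₂₁ x.toBlocks₂₂ :=
    (Matrix.fromBlocks_toBlocks x).symm
  have h1 : (1 : glnn K n) = Matrix.fromBlocks 1 0 0 1 := by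
    rw [← Matrix.fromBlocks_one]
  rw [he, hx, h1, Matrix.fromBlocks_multiply, Matrix.fromBlocks_multiply,
    Matrix.fromBlocks_smul] at hb
  rw [sub_eq_add_neg, Matrix.fromBlocks_neg, Matrix.fromBlocks_add] at hb
  rw [Matrix.toBlocks_fromBlocks₁₁, Matrix.toBlocks_fromBlocks₁₁] at hb
  simp only [Matrix.mul_zero, Matrix.zero_mul, add_zero, ← sub_eq_add_neg] at hb
  have htr := congrArg Matrix.trace hb
  rw [Matrix.trace_sub, Matrix.trace_mul_comm, sub_self, Matrix.trace_smul,
    Matrix.trace_one] at htr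
  have hcn : c * (n : K) = 0 := by
    simpa [Fintype.card_fin, smul_eq_mul, eq_comm] using htr
  have hn0 : (n : K) ≠ 0 := fun h =>
    hp ((CharP.cast_eq_zero_iff K (ringChar K) n).mp h)
  have hc0 : c = 0 := by
    rcases mul_eq_zero.mp hcn with h | h
    · exact h
    · exact absurd h hn0
  rw [← hc, hc0, zero_smul]


lemma rank_aux (K : Type*) [Field K] (M : Type*) [AddCommGroup M] [Module K M]
    [FiniteDimensional K M] (S L : Submodule K M) (f : M →ₗ[K] M)
    (hLS : L ≤ S) (hLf : ∀ y ∈ L, f y = 0)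
    (hpart : ∀ x, f x ∈ L → f x = 0)
    (hrkL : Module.finrank K L = 1) :
    Module.finrank K
      (Submodule.map (Submodule.comap S.subtype L).mkQ
        (Submodule.comap S.subtype (Submodule.comap f L))) =
    Module.finrank K (S ⊓ LinearMap.ker f : Submodule K M) - 1 := by
  have hCeq : Submodule.comap S.subtype (Submodule.comap f L)
      = Submodule.comap S.subtype (LinearMap.ker f) := by
    ext y
    simp only [Submodule.mem_comap, LinearMap.mem_ker]
    exact ⟨fun h => hpart _ h, fun h => h ▸ Submodule.zero_mem _⟩
  rw [hCeq]
  set Z : Submodule K S := Submodule.comap S.subtype L with hZ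
  set C : Submodule K S := Submodule.comap S.subtype (LinearMap.ker f) with hC
  have hZC : Z ≤ C := by
    intro y hy
    have h1 : (y : M) ∈ L := hy
    simp only [hC, Submodule.mem_comap, LinearMap.mem_ker]
    exact hLf _ h1
  have hrkZ : Module.finrank K Z = 1 := by
    rw [← hrkL]
    exact LinearEquiv.finrank_eq (Submodule.comapSubtypeEquivOfLe hLS)
  have hrkCZ : Module.finrank K (Submodule.comap C.subtype Z) = 1 := by
    rw [← hrkZ]
    exact LinearEquiv.finrank_eq (Submodule.comapSubtypeEquivOfLe hZC)
  have hrkC : Module.finrank K C = Module.finrank K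
      (S ⊓ LinearMap.ker f : Submodule K M) := by
    rw [← Submodule.map_comap_subtype]
    exact LinearEquiv.finrank_eq (Submodule.equivSubtypeMap S C)
  have hrn := LinearMap.finrank_range_add_finrank_ker (Z.mkQ.domRestrict C)
  rw [LinearMap.range_domRestrict, LinearMap.ker_domRestrict, Submodule.ker_mkQ,
    hrkCZ, hrkC] at hrn
  omega

set_option synthInstance.maxHeartbeats 1000000 in
set_option maxHeartbeats 1000000 in
/-- If `p ∤ n` and `e` is an even nilpotent element of `sl(n|n)`, then any
`x ∈ sl(n|n)` with `[e,x] ∈ K·I` satisfies `[e,x] = 0`; consequently the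
quotient map `φ : sl(n|n) → psl(n|n) = sl(n|n)/K·I` restricts to a surjection
of centralizers with kernel `K·I`, so that the centralizer of `φ(e)` in
`psl(n|n)` has dimension `dim sl(n|n)^e - 1`. -/
theorem stmt_8 (K : Type*) [Field K] [IsAlgClosed K] (n : ℕ) (hn : 0 < n)
    (hp : ¬ (ringChar K ∣ n))
    (e : glnn K n)
    (heven : e.toBlocks₁₂ = 0 ∧ e.toBlocks₂₁ = 0)
    (hnil : IsNilpotent e) (hsl : strL K n e = 0) :
    (∀ x : glnn K n, strL K n x = 0 →
      adL e x ∈ Submodule.span K {(1 : glnn K n)} → adL e x = 0) ∧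
    Module.finrank K
      (Submodule.map
        (Submodule.comap (LinearMap.ker (strL K n)).subtype
          (Submodule.span K {(1 : glnn K n)})).mkQ
        (Submodule.comap (LinearMap.ker (strL K n)).subtype
          (Submodule.comap (adL e) (Submodule.span K {(1 : glnn K n)})))) =
      Module.finrank K
        (LinearMap.ker (strL K n) ⊓ LinearMap.ker (adL e) : Submodule K (glnn K n))
        - 1 := by
  have part1 := part1_aux K n hp e heven
  refine ⟨fun x _ h => part1 x h, ?_⟩
  have hone : (1 : glnn K n) ∈ LinearMap.ker (strL K n) := by
    simp only [LinearMap.mem_ker, strL, LinearMap.coe_comp, Function.comp_apply,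
      LinearMap.mulLeft_apply, Matrix.traceLinearMap_apply, mul_one]
    simp [Matrix.trace, Matrix.diag, Fintype.sum_sum_type,
      Matrix.fromBlocks_apply₁₁, Matrix.fromBlocks_apply₂₂]
  have hLS : Submodule.span K {(1 : glnn K n)} ≤ LinearMap.ker (strL K n) := by
    rw [Submodule.span_le, Set.singleton_subset_iff]; exact hone
  have hadL : ∀ y ∈ Submodule.span K {(1 : glnn K n)}, adL e y = 0 := by
    intro y hy
    obtain ⟨c, hc⟩ := Submodule.mem_span_singleton.mp hy
    rw [← hc]
    simp [adL]
  have hone0 : (1 : glnn K n) ≠ 0 := by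
    intro h
    have := congrFun (congrFun h (Sum.inl ⟨0, hn⟩)) (Sum.inl ⟨0, hn⟩)
    rw [Matrix.one_apply_eq] at this
    simp at this
  exact rank_aux K (glnn K n) (LinearMap.ker (strL K n))
    (Submodule.span K {(1 : glnn K n)}) (adL e) hLS hadL part1
    (finrank_span_singleton hone0)
end
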